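/- (Claim (3.4) in the proof of Theorem 3.1): Given a well posed nonlinear semigroup E on a real normed vector space X, a numerical method C convergent to it, a regular subset Z' ⊆ Z, T ∈ (0,∞) and a compact set K ⊆ X, the set H = { C^n_{Δt} u : Δt ∈ [0,T], n ∈ ℕ, nΔt ≤ T, u ∈ K ∩ X'_{nΔt} } is totally bounded (precompact) in X; in particular H is bounded. -/

import Mathlib

open Set

variable (X : Type*) [NormedAddCommGroup X] [NormedSpace ℝ X]

/-- The set `Z = ⋃_{t ≥ 0} {t} × X_t ⊆ [0,∞) × X`. -/
def ZSet (Xt : ℝ → Set X) : Set (ℝ × X) :=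
  {p : ℝ × X | 0 ≤ p.1 ∧ p.2 ∈ Xt p.1}

/-- A nonlinear semigroup on `X`: a family of subsets `Xt t ⊆ X` with
`X_{t+s} ⊆ X_t`, together with maps `E t : X → X` with `E 0 = id` on `X_0`,
`E t` mapping `X_{t+s}` into `X_s`, and the semigroup law. -/
structure IsNonlinearSemigroup (Xt : ℝ → Set X) (E : ℝ → X → X) : Prop where
  nested : ∀ t s : ℝ, 0 ≤ t → 0 ≤ s → Xt (t + s) ⊆ Xt t
  id_zero : ∀ u ∈ Xt 0, E 0 u = u
  maps : ∀ t s : ℝ, 0 ≤ t → 0 ≤ s → ∀ u ∈ Xt (t + s), E t u ∈ Xt s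
  comp : ∀ t s : ℝ, 0 ≤ t → 0 ≤ s → ∀ u ∈ Xt (t + s), E (t + s) u = E s (E t u)

/-- Well posedness: `(t,u) ↦ E t u` is continuous on `Z`. -/
def WellPosed (Xt : ℝ → Set X) (E : ℝ → X → X) : Prop :=
  ContinuousOn (fun p : ℝ × X => E p.1 p.2) (ZSet X Xt)

/-- A numerical method: a continuous map `C : [0,∞) × X → X` with `C 0 = id`. -/
structure IsNumericalMethod (C : ℝ → X → X) : Prop where
  cont : ContinuousOn (fun p : ℝ × X => C p.1 p.2) {p : ℝ × X | 0 ≤ p.1}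
  id_zero : ∀ u : X, C 0 u = u

/-- A regular subset `Z' ⊆ Z`: closed, and invariant (in the appropriate sense)
under the semigroup and the numerical method.  Here `X'_t = {u | (t,u) ∈ Z'}`. -/
def RegularSet (Xt : ℝ → Set X) (E C : ℝ → X → X) (Z' : Set (ℝ × X)) : Prop :=
  Z' ⊆ ZSet X Xt ∧ IsClosed Z' ∧
  (∀ t s : ℝ, 0 ≤ t → 0 ≤ s → ∀ u : X, (t + s, u) ∈ Z' → (s, E t u) ∈ Z') ∧
  (∀ t Δt : ℝ, 0 ≤ t → 0 ≤ Δt → ∀ u : X, (t + Δt, u) ∈ Z' → (t, C Δt u) ∈ Z')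

/-- Local stability (Definition 2.3). -/
def LocallyStable (Xt : ℝ → Set X) (E C : ℝ → X → X) : Prop :=
  ∀ Z' : Set (ℝ × X), RegularSet X Xt E C Z' →
  ∀ T : ℝ, 0 < T → ∀ K : Set X, IsCompact K →
  ∃ L' ρ' : ℝ, 0 < L' ∧ 0 < ρ' ∧
    ∀ (Δt : ℝ) (n : ℕ) (u v : X), 0 < Δt → (n : ℝ) * Δt ≤ T →
      u ∈ K → v ∈ K → ((n : ℝ) * Δt, u) ∈ Z' → ((n : ℝ) * Δt, v) ∈ Z' →
      ‖v - u‖ ≤ ρ' → ‖(C Δt)^[n] v - (C Δt)^[n] u‖ ≤ L' * ‖v - u‖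

/-- Distant stability (Definition 2.4). -/
def DistantlyStable (Xt : ℝ → Set X) (E C : ℝ → X → X) : Prop :=
  ∀ Z' : Set (ℝ × X), RegularSet X Xt E C Z' →
  ∀ T : ℝ, 0 < T → ∀ K : Set X, IsCompact K → ∀ ρ : ℝ, 0 < ρ →
  ∃ L'' : ℝ, 0 < L'' ∧
    ∀ (Δt : ℝ) (n : ℕ) (u v : X), 0 < Δt → (n : ℝ) * Δt ≤ T →
      u ∈ K → v ∈ K → ((n : ℝ) * Δt, u) ∈ Z' → ((n : ℝ) * Δt, v) ∈ Z' →
      ρ ≤ ‖v - u‖ → ‖(C Δt)^[n] v - (C Δt)^[n] u‖ ≤ L'' * ‖v - u‖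

/-- Stability (Definition 2.5). -/
def Stable (Xt : ℝ → Set X) (E C : ℝ → X → X) : Prop :=
  ∀ Z' : Set (ℝ × X), RegularSet X Xt E C Z' →
  ∀ T : ℝ, 0 < T → ∀ K : Set X, IsCompact K →
  ∃ L : ℝ, 0 < L ∧
    ∀ (Δt : ℝ) (n : ℕ) (u v : X), 0 < Δt → (n : ℝ) * Δt ≤ T →
      u ∈ K → v ∈ K → ((n : ℝ) * Δt, u) ∈ Z' → ((n : ℝ) * Δt, v) ∈ Z' →
      ‖(C Δt)^[n] v - (C Δt)^[n] u‖ ≤ L * ‖v - u‖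

/-- Convergence of the numerical method to the semigroup (Definition 3.1). -/
def Convergent (Xt : ℝ → Set X) (E C : ℝ → X → X) : Prop :=
  ∀ Z' : Set (ℝ × X), RegularSet X Xt E C Z' →
  ∀ T : ℝ, 0 < T → ∀ K : Set X, IsCompact K → ∀ ε : ℝ, 0 < ε →
  ∃ θ : ℝ, 0 < θ ∧
    ∀ (t Δt : ℝ) (n : ℕ) (u : X), t ∈ Icc (0 : ℝ) T → 0 < Δt →
      u ∈ K → (t, u) ∈ Z' → ((n : ℝ) * Δt, u) ∈ Z' →
      Δt ≤ θ → |t - (n : ℝ) * Δt| ≤ θ →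
      ‖E t u - (C Δt)^[n] u‖ ≤ ε

/-- Consistency of the numerical method with the semigroup (Definition 3.2). -/
def Consistent (Xt : ℝ → Set X) (E C : ℝ → X → X) : Prop :=
  ∀ Z' : Set (ℝ × X), RegularSet X Xt E C Z' →
  ∀ T : ℝ, 0 < T → ∀ K : Set X, IsCompact K → ∀ ε : ℝ, 0 < ε →
  ∃ δ : ℝ, 0 < δ ∧
    ∀ (t Δt : ℝ) (u : X), t ∈ Icc (0 : ℝ) T → 0 < Δt → Δt ≤ δ →
      u ∈ K → (t + Δt, u) ∈ Z' →
      ‖C Δt (E t u) - E Δt (E t u)‖ ≤ ε * Δt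

/-- Condition (4.3): the optimal distant-stability constants remain bounded as
`ρ ↓ 0`, i.e. one constant works simultaneously for all `ρ > 0`. -/
def Condition43 (Xt : ℝ → Set X) (E C : ℝ → X → X) : Prop :=
  ∀ Z' : Set (ℝ × X), RegularSet X Xt E C Z' →
  ∀ T : ℝ, 0 < T → ∀ K : Set X, IsCompact K →
  ∃ M : ℝ, 0 < M ∧
    ∀ ρ : ℝ, 0 < ρ →
    ∀ (Δt : ℝ) (n : ℕ) (u v : X), 0 < Δt → (n : ℝ) * Δt ≤ T →
      u ∈ K → v ∈ K → ((n : ℝ) * Δt, u) ∈ Z' → ((n : ℝ) * Δt, v) ∈ Z' →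
      ρ ≤ ‖v - u‖ → ‖(C Δt)^[n] v - (C Δt)^[n] u‖ ≤ M * ‖v - u‖


/-- Auxiliary: a set that, for every `ε > 0`, lies within distance `ε` of some
compact set is totally bounded. -/
lemma totallyBounded_of_near_compact {Y : Type*} [MetricSpace Y] {A : Set Y}
    (h : ∀ ε : ℝ, 0 < ε → ∃ S : Set Y, IsCompact S ∧ ∀ x ∈ A, ∃ y ∈ S, dist x y ≤ ε) :
    TotallyBounded A := by
  rw [Metric.totallyBounded_iff]
  intro ε hε
  obtain ⟨S, hS, hA⟩ := h (ε / 3) (by positivity)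
  obtain ⟨t, ht, hcov⟩ := Metric.totallyBounded_iff.mp hS.totallyBounded (ε / 3) (by positivity)
  refine ⟨t, ht, fun x hx => ?_⟩
  obtain ⟨y, hyS, hd⟩ := hA x hx
  obtain ⟨c, hct, hyc⟩ := Set.mem_iUnion₂.mp (hcov hyS)
  refine Set.mem_iUnion₂.mpr ⟨c, hct, ?_⟩
  have : dist x c ≤ dist x y + dist y c := dist_triangle _ _ _
  have hyc' : dist y c < ε / 3 := Metric.mem_ball.mp hyc
  exact Metric.mem_ball.mpr (by linarith)

/-- Claim (3.4) in the proof of Theorem 3.1: the set `H` is totally bounded,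
hence in particular bounded. -/
theorem H_totallyBounded
    (Xt : ℝ → Set X) (E C : ℝ → X → X)
    (hE : IsNonlinearSemigroup X Xt E) (hWP : WellPosed X Xt E)
    (hC : IsNumericalMethod X C) (hconv : Convergent X Xt E C)
    (Z' : Set (ℝ × X)) (hZ' : RegularSet X Xt E C Z')
    (T : ℝ) (hT : 0 < T) (K : Set X) (hK : IsCompact K) :
    TotallyBounded {x : X | ∃ (Δt : ℝ) (n : ℕ) (u : X),
        Δt ∈ Icc (0 : ℝ) T ∧ (n : ℝ) * Δt ≤ T ∧ u ∈ K ∧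
        ((n : ℝ) * Δt, u) ∈ Z' ∧ x = (C Δt)^[n] u} ∧
    Bornology.IsBounded {x : X | ∃ (Δt : ℝ) (n : ℕ) (u : X),
        Δt ∈ Icc (0 : ℝ) T ∧ (n : ℝ) * Δt ≤ T ∧ u ∈ K ∧
        ((n : ℝ) * Δt, u) ∈ Z' ∧ x = (C Δt)^[n] u} := by
  set H : Set X := {x : X | ∃ (Δt : ℝ) (n : ℕ) (u : X),
        Δt ∈ Icc (0 : ℝ) T ∧ (n : ℝ) * Δt ≤ T ∧ u ∈ K ∧
        ((n : ℝ) * Δt, u) ∈ Z' ∧ x = (C Δt)^[n] u} with hH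
  have gcont : ∀ n : ℕ, ContinuousOn (fun p : ℝ × X => (C p.1)^[n] p.2)
      {p : ℝ × X | 0 ≤ p.1} := by
    intro n
    induction n with
    | zero => simpa using continuousOn_snd
    | succ n ih =>
      have heq : (fun p : ℝ × X => (C p.1)^[n + 1] p.2)
          = (fun q : ℝ × X => C q.1 q.2) ∘ (fun p : ℝ × X => (p.1, (C p.1)^[n] p.2)) := by
        funext p; simp [Function.iterate_succ_apply']
      rw [heq]
      exact hC.cont.comp (continuousOn_fst.prodMk ih) (fun p hp => hp)
  have key : ∀ ε : ℝ, 0 < ε → ∃ S : Set X, IsCompact S ∧ ∀ x ∈ H, ∃ y ∈ S, dist x y ≤ ε := by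
    intro ε hε
    obtain ⟨θ, hθ, hconv'⟩ := hconv Z' hZ' T hT K hK ε hε
    -- compact set from the semigroup
    have hZ''sub : Z' ∩ (Icc (0 : ℝ) T ×ˢ K) ⊆ ZSet X Xt := fun p hp => hZ'.1 hp.1
    have hZ''comp : IsCompact (Z' ∩ (Icc (0 : ℝ) T ×ˢ K)) :=
      (isCompact_Icc.prod hK).inter_left hZ'.2.1
    have hK2 : IsCompact ((fun p : ℝ × X => E p.1 p.2) '' (Z' ∩ (Icc (0 : ℝ) T ×ˢ K))) :=
      hZ''comp.image_of_continuousOn (hWP.mono hZ''sub)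
    -- compact set from finitely many iterates
    set N : ℕ := ⌈T / θ⌉₊ with hN
    have hsub : (Icc (0 : ℝ) T ×ˢ K) ⊆ {p : ℝ × X | 0 ≤ p.1} := fun p hp => hp.1.1
    have hK3 : IsCompact (⋃ n ∈ Finset.range (N + 1),
        (fun p : ℝ × X => (C p.1)^[n] p.2) '' (Icc (0 : ℝ) T ×ˢ K)) := by
      refine (Finset.range (N + 1)).isCompact_biUnion (fun n _ => ?_)
      exact (isCompact_Icc.prod hK).image_of_continuousOn ((gcont n).mono hsub)
    refine ⟨(fun p : ℝ × X => E p.1 p.2) '' (Z' ∩ (Icc (0 : ℝ) T ×ˢ K)) ∪ K ∪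
        (⋃ n ∈ Finset.range (N + 1),
          (fun p : ℝ × X => (C p.1)^[n] p.2) '' (Icc (0 : ℝ) T ×ˢ K)),
      (hK2.union hK).union hK3, ?_⟩
    rintro x ⟨Δt, n, u, hΔt, hnT, huK, huZ, rfl⟩
    rcases eq_or_lt_of_le hΔt.1 with h0 | h0
    · -- Δt = 0
      refine ⟨u, Or.inl (Or.inr huK), ?_⟩
      have : (C Δt)^[n] u = u := Function.iterate_fixed (by rw [← h0, hC.id_zero]) n
      simp [this, hε.le]
    rcases le_or_gt Δt θ with hle | hgt
    · -- 0 < Δt ≤ θ : use convergence with t = n Δt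
      have ht0 : (0 : ℝ) ≤ (n : ℝ) * Δt := mul_nonneg (Nat.cast_nonneg n) hΔt.1
      have htI : (n : ℝ) * Δt ∈ Icc (0 : ℝ) T := ⟨ht0, hnT⟩
      have hb := hconv' ((n : ℝ) * Δt) Δt n u htI h0 huK huZ huZ hle (by simp [hθ.le])
      refine ⟨E ((n : ℝ) * Δt) u, Or.inl (Or.inl ⟨((n : ℝ) * Δt, u), ⟨huZ, htI, huK⟩, rfl⟩), ?_⟩
      rw [dist_eq_norm, norm_sub_rev]
      exact hb
    · -- Δt > θ : finitely many steps
      have hnN : n ≤ N := by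
        have h1 : (n : ℝ) ≤ T / θ := by
          rw [le_div_iff₀ hθ]
          calc (n : ℝ) * θ ≤ (n : ℝ) * Δt :=
                mul_le_mul_of_nonneg_left hgt.le (Nat.cast_nonneg n)
            _ ≤ T := hnT
        exact_mod_cast h1.trans (Nat.le_ceil _)
      refine ⟨(C Δt)^[n] u, Or.inr ?_, by simp [hε.le]⟩
      exact Set.mem_biUnion (Finset.mem_range.mpr (Nat.lt_succ_of_le hnN))
        ⟨(Δt, u), ⟨hΔt, huK⟩, rfl⟩
  have htb : TotallyBounded H := totallyBounded_of_near_compact key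
  exact ⟨htb, htb.isBounded⟩
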